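/- For every real number z with 0 < z < 1, ∑_{n=0}^∞ 4^n n z^n / ((2n+1)·C_n) = (2z+1)/(4(1−z)^2) + ((4z−1)/(4(1−z)^3)) · arctan(√(z/(1−z))) / √(z/(1−z)). -/

import Mathlib

open Real Finset MeasureTheory intervalIntegral
open scoped Nat

private noncomputable def Acoef (n : ℕ) : ℝ := (4:ℝ)^n * ((n ! : ℝ) * n ! / (2*n+1)!)

private lemma prod_aux (n : ℕ) : n ! * ∏ j ∈ Finset.range (n+1), (n+1+j) = (2*n+1)! := by
  have h1 : ∏ i ∈ Finset.Ico (n+1) (2*n+2), i = ∏ j ∈ Finset.range (n+1), (n+1+j) := by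
    rw [Finset.prod_Ico_eq_prod_range, show 2*n+2-(n+1) = n+1 from by omega]
  rw [← h1, ← Finset.prod_Ico_id_eq_factorial n,
    Finset.prod_Ico_consecutive _ (by omega) (by omega),
    show 2*n+2 = (2*n+1)+1 from by omega, Finset.prod_Ico_id_eq_factorial]

private lemma beta_aux (n : ℕ) : ∫ t in (0:ℝ)..1, t^n * (1-t)^n = (n ! : ℝ) * n ! / (2*n+1)! := by
  have h := Complex.betaIntegral_eval_nat_add_one_right (u := (n:ℂ)+1) (by
    simp only [Complex.add_re, Complex.natCast_re, Complex.one_re]; positivity) n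
  have hne : (n ! : ℂ) ≠ 0 := by exact_mod_cast Nat.factorial_ne_zero n
  have hprod : ∏ j ∈ Finset.range (n+1), ((n:ℂ)+1+(j:ℕ)) = ((2*n+1)! : ℂ) / (n ! : ℂ) := by
    rw [eq_div_iff hne, mul_comm]
    have := congrArg (fun k : ℕ => (k : ℂ)) (prod_aux n)
    push_cast at this
    convert this using 2
  rw [hprod, div_div_eq_mul_div] at h
  have hL : Complex.betaIntegral ((n:ℂ)+1) ((n:ℂ)+1)
      = ((∫ t in (0:ℝ)..1, t^n * (1-t)^n : ℝ) : ℂ) := by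
    rw [Complex.betaIntegral, ← intervalIntegral.integral_ofReal]
    apply intervalIntegral.integral_congr
    intro x _
    dsimp only
    rw [show ((n:ℂ)+1-1) = ((n:ℕ) : ℂ) from by ring, Complex.cpow_natCast,
      Complex.cpow_natCast]
    push_cast
    ring
  rw [hL] at h
  have h2 : ((∫ t in (0:ℝ)..1, t^n * (1-t)^n : ℝ) : ℂ)
      = (((n ! : ℝ) * n ! / (2*n+1)! : ℝ) : ℂ) := by push_cast; exact h
  exact Complex.ofReal_injective h2

private lemma hasSum_S0 (z : ℝ) (hz0 : 0 < z) (hz1 : z < 1) :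
    HasSum (fun n : ℕ => Acoef n * z^n)
      (Real.arctan (Real.sqrt (z/(1-z))) / ((1-z) * Real.sqrt (z/(1-z)))) := by
  unfold Acoef
  have h1z : (0:ℝ) < 1 - z := by linarith
  set b := Real.sqrt (z/(1-z)) with hbdef
  have hbpos : 0 < b := Real.sqrt_pos.mpr (by positivity)
  have hb2 : (1-z) * b^2 = z := by
    rw [hbdef, Real.sq_sqrt (by positivity)]
    field_simp
  have hden : ∀ t : ℝ, 0 < 1 - 4*z*t*(1-t) := fun t => by
    nlinarith [mul_nonneg hz0.le (sq_nonneg (2*t-1))]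
  -- each integral evaluates the coefficient
  have hInt : ∀ n : ℕ, ∫ t in (0:ℝ)..1, (4*z*t*(1-t))^n
      = (4:ℝ)^n * ((n ! : ℝ) * n ! / (2*n+1)!) * z^n := by
    intro n
    have : ∀ t : ℝ, (4*z*t*(1-t))^n = ((4:ℝ)^n * z^n) * (t^n * (1-t)^n) := by
      intro t; rw [show 4*z*t*(1-t) = (4*z)*(t*(1-t)) from by ring, mul_pow, mul_pow, mul_pow]
    simp only [this]
    rw [intervalIntegral.integral_const_mul, beta_aux n]
    ring
  -- bound on [0,1]
  have hbound : ∀ t ∈ Set.Icc (0:ℝ) 1, 0 ≤ 4*z*t*(1-t) ∧ 4*z*t*(1-t) ≤ z := by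
    rintro t ⟨h0, h1⟩
    constructor
    · have : 0 ≤ t*(1-t) := mul_nonneg h0 (by linarith)
      nlinarith
    · nlinarith [mul_nonneg hz0.le (sq_nonneg (2*t-1))]
  -- swap sum and integral
  have hswap : HasSum (fun n : ℕ => ∫ t in (0:ℝ)..1, (4*z*t*(1-t))^n)
      (∫ t in (0:ℝ)..1, (1 - 4*z*t*(1-t))⁻¹) := by
    apply intervalIntegral.hasSum_integral_of_dominated_convergence
      (F := fun (n : ℕ) (t : ℝ) => (4*z*t*(1-t))^n) (bound := fun n _ => z^n)
    · intro n
      apply Continuous.aestronglyMeasurable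
      fun_prop
    · intro n
      filter_upwards with t ht
      have ht' : t ∈ Set.Icc (0:ℝ) 1 := by
        rw [Set.uIoc_of_le (by norm_num : (0:ℝ) ≤ 1)] at ht
        exact ⟨ht.1.le, ht.2⟩
      obtain ⟨h0, h1⟩ := hbound t ht'
      rw [Real.norm_eq_abs, abs_pow, abs_of_nonneg h0]
      exact pow_le_pow_left₀ h0 h1 n
    · filter_upwards with t _
      exact summable_geometric_of_lt_one hz0.le hz1
    · exact intervalIntegrable_const
    · filter_upwards with t ht
      have ht' : t ∈ Set.Icc (0:ℝ) 1 := by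
        rw [Set.uIoc_of_le (by norm_num : (0:ℝ) ≤ 1)] at ht
        exact ⟨ht.1.le, ht.2⟩
      obtain ⟨h0, h1⟩ := hbound t ht'
      exact hasSum_geometric_of_lt_one h0 (lt_of_le_of_lt h1 hz1)
  -- evaluate the integral via FTC
  have hFTC : ∫ t in (0:ℝ)..1, (1 - 4*z*t*(1-t))⁻¹
      = Real.arctan b / ((1-z) * b) := by
    have hderiv : ∀ t ∈ Set.uIcc (0:ℝ) 1,
        HasDerivAt (fun t : ℝ => Real.arctan (b*(2*t-1)) / ((1-z)*(2*b)))
          ((1 - 4*z*t*(1-t))⁻¹) t := by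
      intro t _
      have h1 : HasDerivAt (fun t : ℝ => b*(2*t-1)) (2*b) t := by
        have := (((hasDerivAt_id t).const_mul (2:ℝ)).sub_const 1).const_mul b
        exact this.congr_deriv (by ring)
      have h2 := (Real.hasDerivAt_arctan (b*(2*t-1))).comp t h1
      have h3 := h2.div_const ((1-z)*(2*b))
      refine h3.congr_deriv ?_
      have hkey : (1-z)*(1+(b*(2*t-1))^2) = 1 - 4*z*t*(1-t) := by
        have : (b*(2*t-1))^2 = b^2*(2*t-1)^2 := by ring
        rw [this]
        nlinarith [hb2]
      rw [← hkey]
      have hX : 0 < 1+(b*(2*t-1))^2 := by positivity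
      field_simp
    rw [intervalIntegral.integral_eq_sub_of_hasDerivAt hderiv (by
      apply ContinuousOn.intervalIntegrable
      apply ContinuousOn.inv₀
      · fun_prop
      · intro t _; exact (hden t).ne')]
    rw [show b*(2*1-1) = b from by ring, show b*(2*0-1) = -b from by ring, Real.arctan_neg]
    field_simp
    ring
  rw [← hFTC]
  exact hswap.congr_fun fun n => (hInt n).symm

private lemma Acoef_rec (n : ℕ) : (2*(n:ℝ)+3) * Acoef (n+1) = 2*((n:ℝ)+1) * Acoef n := by
  have h1 : (2*(n+1)+1)! = (2*n+3) * ((2*n+2) * (2*n+1)!) := by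
    rw [show 2*(n+1)+1 = (2*n+2)+1 from by ring, Nat.factorial_succ,
      show 2*n+2 = (2*n+1)+1 from rfl, Nat.factorial_succ]
  have h2 : (n+1)! = (n+1) * n ! := Nat.factorial_succ n
  unfold Acoef
  rw [h1, h2]
  have e1 : ((2*n+1)! : ℝ) ≠ 0 := by exact_mod_cast Nat.factorial_ne_zero _
  push_cast
  field_simp
  ring

private lemma Acoef_zero : Acoef 0 = 1 := by unfold Acoef; norm_num

private lemma Acoef_pos (n : ℕ) : 0 < Acoef n := by
  unfold Acoef
  have e1 : (0:ℝ) < (2*n+1)! := by exact_mod_cast Nat.factorial_pos _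
  have e2 : (0:ℝ) < n ! := by exact_mod_cast Nat.factorial_pos _
  positivity

private lemma Acoef_le_one (n : ℕ) : Acoef n ≤ 1 := by
  induction n with
  | zero => rw [Acoef_zero]
  | succ n ih =>
    have h := Acoef_rec n
    have h3 : (0:ℝ) < 2*(n:ℝ)+3 := by positivity
    nlinarith [Acoef_pos n, Acoef_pos (n+1)]

/-- For `0 < z < 1`,
`∑_{n=0}^∞ 4^n n z^n / ((2n+1)·C_n)
  = (2z+1)/(4(1-z)^2) + ((4z-1)/(4(1-z)^3)) · arctan(√(z/(1-z))) / √(z/(1-z))`. -/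
theorem g_one_closed_form (z : ℝ) (hz0 : 0 < z) (hz1 : z < 1) :
    ∑' n : ℕ, 4 ^ n * (n : ℝ) * z ^ n / ((2 * (n : ℝ) + 1) * (catalan n : ℝ))
      = (2 * z + 1) / (4 * (1 - z) ^ 2)
        + (4 * z - 1) / (4 * (1 - z) ^ 3)
          * (Real.arctan (Real.sqrt (z / (1 - z))) / Real.sqrt (z / (1 - z))) := by
  have h1z : (0:ℝ) < 1 - z := by linarith
  have hzn : ∀ n : ℕ, 0 < z^n := fun n => pow_pos hz0 n
  -- summability of weighted series
  have hnorm : ‖z‖ < 1 := by rw [Real.norm_eq_abs, abs_of_pos hz0]; exact hz1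
  have sA : Summable (fun n : ℕ => Acoef n * z^n) := (hasSum_S0 z hz0 hz1).summable
  have key_le : ∀ (k : ℕ) (n : ℕ), (n:ℝ)^k * Acoef n * z^n ≤ (n:ℝ)^k * z^n := by
    intro k n
    have := Acoef_le_one n
    have h0 : (0:ℝ) ≤ (n:ℝ)^k * z^n := by positivity
    nlinarith [Acoef_pos n, hzn n, pow_nonneg (Nat.cast_nonneg n : (0:ℝ) ≤ n) k]
  have smk : ∀ k : ℕ, Summable (fun n : ℕ => (n:ℝ)^k * Acoef n * z^n) := by
    intro k
    apply Summable.of_nonneg_of_le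
      (fun n => mul_nonneg (mul_nonneg (by positivity) (Acoef_pos n).le) (hzn n).le)
      (key_le k)
      (summable_pow_mul_geometric_of_norm_lt_one k hnorm)
  have sT : Summable (fun n : ℕ => (n:ℝ) * Acoef n * z^n) := by
    have := smk 1; simpa using this
  have sU : Summable (fun n : ℕ => (n:ℝ)^2 * Acoef n * z^n) := smk 2
  set S0 := ∑' n : ℕ, Acoef n * z^n with hS0def
  set T := ∑' n : ℕ, (n:ℝ) * Acoef n * z^n with hTdef
  set U := ∑' n : ℕ, (n:ℝ)^2 * Acoef n * z^n with hUdef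
  have hS0 : HasSum (fun n : ℕ => Acoef n * z^n) S0 := sA.hasSum
  have hT : HasSum (fun n : ℕ => (n:ℝ) * Acoef n * z^n) T := sT.hasSum
  have hU : HasSum (fun n : ℕ => (n:ℝ)^2 * Acoef n * z^n) U := sU.hasSum
  -- Equation 1
  have hfa : HasSum (fun n : ℕ => (2*(n:ℝ)+1) * Acoef n * z^n) (2*T + S0) := by
    have := (hT.mul_left 2).add hS0
    exact this.congr_fun fun n => by push_cast; ring
  have hq : HasSum (fun n : ℕ => (2*((n:ℝ)+1)) * Acoef n * z^(n+1)) (2*z*T + 2*z*S0) := by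
    have := ((hT.mul_left (2*z)).add (hS0.mul_left (2*z)))
    exact this.congr_fun fun n => by push_cast; ring
  have hshift1 : HasSum (fun n : ℕ => (2*((n:ℕ)+1:ℝ)+1) * Acoef (n+1) * z^(n+1))
      (2*z*T + 2*z*S0) := by
    apply hq.congr_fun
    intro n
    have := Acoef_rec n
    have : (2*((n:ℕ)+1:ℝ)+1) * Acoef (n+1) = 2*((n:ℝ)+1) * Acoef n := by
      rw [show (2*((n:ℕ)+1:ℝ)+1) = 2*(n:ℝ)+3 from by push_cast; ring]
      exact Acoef_rec n
    rw [this]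
  have eq1 : 2*T + S0 = 2*z*T + 2*z*S0 + 1 := by
    have h := (hasSum_nat_add_iff (f := fun n : ℕ => (2*(n:ℝ)+1) * Acoef n * z^n) 1).mp
      (hshift1.congr_fun fun n => by push_cast; ring)
    have h0 : ∑ i ∈ Finset.range 1, (2*(i:ℝ)+1) * Acoef i * z^i = 1 := by
      simp [Acoef_zero]
    rw [h0] at h
    exact hfa.unique h
  -- Equation 2
  have hga : HasSum (fun n : ℕ => (n:ℝ)*(2*(n:ℝ)+1) * Acoef n * z^n) (2*U + T) := by
    have := (hU.mul_left 2).add hT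
    exact this.congr_fun fun n => by push_cast; ring
  have hq2 : HasSum (fun n : ℕ => (((n:ℝ)+1)*(2*((n:ℝ)+1))) * Acoef n * z^(n+1))
      (2*z*U + 4*z*T + 2*z*S0) := by
    have := ((hU.mul_left (2*z)).add (hT.mul_left (4*z))).add (hS0.mul_left (2*z))
    exact this.congr_fun fun n => by push_cast; ring
  have hshift2 : HasSum (fun n : ℕ => (((n:ℕ)+1:ℝ))*(2*((n:ℕ)+1:ℝ)+1) * Acoef (n+1) * z^(n+1))
      (2*z*U + 4*z*T + 2*z*S0) := by
    apply hq2.congr_fun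
    intro n
    have hr : (2*((n:ℕ)+1:ℝ)+1) * Acoef (n+1) = 2*((n:ℝ)+1) * Acoef n := by
      rw [show (2*((n:ℕ)+1:ℝ)+1) = 2*(n:ℝ)+3 from by push_cast; ring]
      exact Acoef_rec n
    calc (((n:ℕ)+1:ℝ))*(2*((n:ℕ)+1:ℝ)+1) * Acoef (n+1) * z^(n+1)
        = ((n:ℝ)+1) * ((2*((n:ℕ)+1:ℝ)+1) * Acoef (n+1)) * z^(n+1) := by push_cast; ring
      _ = ((n:ℝ)+1) * ((2*((n:ℝ)+1)) * Acoef n) * z^(n+1) := by rw [hr]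
      _ = (((n:ℝ)+1)*(2*((n:ℝ)+1))) * Acoef n * z^(n+1) := by ring
  have eq2 : 2*U + T = 2*z*U + 4*z*T + 2*z*S0 := by
    have h := (hasSum_nat_add_iff (f := fun n : ℕ => (n:ℝ)*(2*(n:ℝ)+1) * Acoef n * z^n) 1).mp
      (hshift2.congr_fun fun n => by push_cast; ring)
    have h0 : ∑ i ∈ Finset.range 1, (i:ℝ)*(2*(i:ℝ)+1) * Acoef i * z^i = 0 := by simp
    rw [h0, add_zero] at h
    exact hga.unique h
  -- termwise identity with catalan
  have hterm : ∀ n : ℕ, 4 ^ n * (n : ℝ) * z ^ n / ((2 * (n : ℝ) + 1) * (catalan n : ℝ))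
      = (n:ℝ)^2 * Acoef n * z^n + (n:ℝ) * Acoef n * z^n := by
    intro n
    have hcb : ((n:ℕ)+1) * catalan n = Nat.centralBinom n := succ_mul_catalan_eq_centralBinom n
    have hcb2 : Nat.centralBinom n * (n ! * n !) = (2*n)! := by
      rw [Nat.centralBinom]
      have := Nat.choose_mul_factorial_mul_factorial (Nat.le_mul_of_pos_left n (by norm_num) : n ≤ 2*n)
      rw [show 2*n - n = n from by omega] at this
      rw [← this]; ring
    have hfact : ((2*n+1)! : ℝ) = (2*(n:ℝ)+1) * ((n:ℝ)+1) * (catalan n : ℝ) * ((n ! : ℝ) * n !) := by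
      have h3 : (2*n+1)! = (2*n+1) * (2*n)! := Nat.factorial_succ (2*n)
      have : ((2*n+1)! : ℕ) = (2*n+1) * (((n+1) * catalan n) * (n ! * n !)) := by
        rw [h3, hcb, hcb2]
      have := congrArg (fun k : ℕ => (k:ℝ)) this
      push_cast at this
      rw [this]; ring
    have hc0 : (0:ℝ) < (catalan n : ℝ) := by
      have hcn : 0 < catalan n := by
        rcases Nat.eq_zero_or_pos (catalan n) with h|h
        · exfalso
          have h2 := Nat.centralBinom_pos n
          rw [← succ_mul_catalan_eq_centralBinom, h, mul_zero] at h2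
          exact lt_irrefl 0 h2
        · exact h
      exact_mod_cast hcn
    have hne1 : (2*(n:ℝ)+1) ≠ 0 := by positivity
    have hne2 : ((2*n+1)! : ℝ) ≠ 0 := by exact_mod_cast Nat.factorial_ne_zero _
    have hfne : (n ! : ℝ) ≠ 0 := by exact_mod_cast Nat.factorial_ne_zero n
    unfold Acoef
    rw [div_eq_iff (mul_ne_zero hne1 hc0.ne'), hfact]
    field_simp
  calc ∑' n : ℕ, 4 ^ n * (n : ℝ) * z ^ n / ((2 * (n : ℝ) + 1) * (catalan n : ℝ))
      = ∑' n : ℕ, ((n:ℝ)^2 * Acoef n * z^n + (n:ℝ) * Acoef n * z^n) := by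
        exact tsum_congr hterm
    _ = U + T := Summable.tsum_add sU sT
    _ = (2 * z + 1) / (4 * (1 - z) ^ 2)
        + (4 * z - 1) / (4 * (1 - z) ^ 3)
          * (Real.arctan (Real.sqrt (z / (1 - z))) / Real.sqrt (z / (1 - z))) := by
        have hb : Real.sqrt (z/(1-z)) ≠ 0 := by positivity
        have hS0v : S0 = Real.arctan (Real.sqrt (z/(1-z))) / ((1-z) * Real.sqrt (z/(1-z))) :=
          (hasSum_S0 z hz0 hz1).tsum_eq ▸ rfl
        have harc : Real.arctan (Real.sqrt (z/(1-z))) / Real.sqrt (z/(1-z)) = (1-z) * S0 := by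
          rw [hS0v]; field_simp
        rw [harc]
        have h4 : 4*(1-z)^2*(U+T) = (2*z+1) + (4*z-1)*S0 := by
          linear_combination (2*(1-z))*eq2 + (2*z+1)*eq1
        rw [show U+T = ((2*z+1)+(4*z-1)*S0)/(4*(1-z)^2) from by
          rw [eq_div_iff (by positivity)]; linear_combination h4]
        field_simp
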